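/- arXiv:1709.08958 — 4 statements merged into one kernel-verified Lean document; each statement's English description precedes it below -/
import Mathlib

section
/- Let Γ₁ and Γ₂ be commensurable subgroups of SL(2,ℝ), i.e. Γ₁ ∩ Γ₂ has finite index in both Γ₁ and Γ₂. Then Γ₁ and Γ₂ are isoaxial: ax(Γ₁) = ax(Γ₁ ∩ Γ₂) = ax(Γ₂). -/
open UpperHalfPlane Matrix MatrixGroups Pointwise

/-- The axis of an element `γ` of `SL(2, ℝ)`: the set of points of the upper half-plane
at which the displacement function `z ↦ dist z (γ • z)` attains its infimum over `ℍ`. -/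
noncomputable def axis (γ : SL(2, ℝ)) : Set ℍ :=
  {z : ℍ | ∀ w : ℍ, dist z (γ • z) ≤ dist w (γ • w)}

/-- The set of axes of the hyperbolic elements of a subgroup `Γ` of `SL(2, ℝ)`. -/
noncomputable def axes (Γ : Subgroup SL(2, ℝ)) : Set (Set ℍ) :=
  {P : Set ℍ | ∃ γ ∈ Γ, ((γ : Matrix (Fin 2) (Fin 2) ℝ).trace) ^ 2 > 4 ∧ P = axis γ}

namespace AxesAux

noncomputable def Q (g : SL(2, ℝ)) (z : ℍ) : ℝ :=
  ‖(g 1 0 : ℂ) * (z : ℂ) ^ 2 + ((g 1 1 : ℂ) - (g 0 0 : ℂ)) * z - g 0 1‖ / z.im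

lemma smul_coe' (g : SL(2, ℝ)) (z : ℍ) :
    ((g • z : ℍ) : ℂ) = ((g 0 0 : ℂ) * z + g 0 1) / ((g 1 0 : ℂ) * z + g 1 1) := by
  rw [UpperHalfPlane.specialLinearGroup_apply]
  simp

lemma denom_ne_zero' (g : SL(2, ℝ)) (z : ℍ) : ((g 1 0 : ℂ) * z + g 1 1) ≠ 0 := by
  intro h
  have him : (g 1 0 : ℝ) * z.im = 0 := by
    have := congrArg Complex.im h
    simpa using this
  have hc : (g 1 0 : ℝ) = 0 := by
    rcases mul_eq_zero.mp him with h' | h'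
    · exact h'
    · exact absurd h' (ne_of_gt z.im_pos)
  have hd : (g 1 1 : ℝ) = 0 := by
    rw [hc] at h
    simpa using h
  have hdet : (g : Matrix (Fin 2) (Fin 2) ℝ).det = 1 := g.2
  rw [Matrix.det_fin_two] at hdet
  rw [hc, hd] at hdet
  simp at hdet

lemma im_smul' (g : SL(2, ℝ)) (z : ℍ) :
    (g • z).im = z.im / Complex.normSq ((g 1 0 : ℂ) * z + g 1 1) := by
  have h : (g • z).im = (((g • z : ℍ) : ℂ)).im := rfl
  rw [h, smul_coe', Complex.div_im]
  have hdet : (g 0 0 : ℝ) * g 1 1 - g 0 1 * g 1 0 = 1 := by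
    have := g.2; rwa [Matrix.det_fin_two] at this
  have hne : Complex.normSq ((g 1 0 : ℂ) * z + g 1 1) ≠ 0 :=
    (Complex.normSq_pos.mpr (denom_ne_zero' g z)).ne'
  rw [← sub_div, div_left_inj' hne]
  simp
  linear_combination z.im * hdet

lemma dist_smul_eq (g : SL(2, ℝ)) (z : ℍ) :
    dist z (g • z) = 2 * Real.arsinh (Q g z / 2) := by
  rw [UpperHalfPlane.dist_eq]
  congr 1
  set e : ℂ := (g 1 0 : ℂ) * z + g 1 1 with he
  have hene : e ≠ 0 := denom_ne_zero' g z
  have habs : ‖e‖ ≠ 0 := norm_ne_zero_iff.mpr hene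
  have h1 : dist (z : ℂ) ((g • z : ℍ) : ℂ) =
      ‖(g 1 0 : ℂ) * (z : ℂ) ^ 2 + ((g 1 1 : ℂ) - g 0 0) * z - g 0 1‖
        / ‖e‖ := by
    rw [Complex.dist_eq, smul_coe', ← norm_div]
    congr 1
    rw [← he]
    field_simp
    ring
  have h2 : Real.sqrt (z.im * (g • z).im) = z.im / ‖e‖ := by
    rw [im_smul' g z, ← he]
    rw [show z.im * (z.im / Complex.normSq e) = (z.im / ‖e‖) ^ 2 by
      rw [← Complex.sq_norm]; field_simp]
    exact Real.sqrt_sq (by positivity)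
  rw [h1, h2, Q]
  have him : (z.im : ℝ) ≠ 0 := ne_of_gt z.im_pos
  field_simp

lemma axis_eq_Q (g : SL(2, ℝ)) : axis g = {z : ℍ | ∀ w : ℍ, Q g z ≤ Q g w} := by
  ext z
  simp only [axis, Set.mem_setOf_eq, dist_smul_eq]
  constructor
  · intro h w
    have := h w
    have h2 := (mul_le_mul_iff_right₀ (by norm_num : (0:ℝ) < 2)).mp this
    have := Real.arsinh_le_arsinh.mp h2
    linarith
  · intro h w
    have := h w
    have : Q g z / 2 ≤ Q g w / 2 := by linarith
    have := Real.arsinh_le_arsinh.mpr this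
    linarith

-- Cayley-Hamilton for SL(2,ℝ) matrices
lemma sq_eq (M : Matrix (Fin 2) (Fin 2) ℝ) (hdet : M.det = 1) :
    M ^ 2 = M.trace • M - 1 := by
  rw [Matrix.det_fin_two] at hdet
  have h : M = !![M 0 0, M 0 1; M 1 0, M 1 1] := Matrix.eta_fin_two M
  rw [h, pow_two, Matrix.mul_fin_two, Matrix.trace_fin_two]
  ext i j
  fin_cases i <;> fin_cases j <;>
    simp [Matrix.one_apply, Matrix.smul_apply] <;> ring_nf <;> linear_combination -hdet

lemma pow_eq_lin (M : Matrix (Fin 2) (Fin 2) ℝ) (hdet : M.det = 1)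
    (l m : ℝ) (hne : l ≠ m) (hsum : l + m = M.trace) (hprod : l * m = 1) (n : ℕ) :
    M ^ n = ((l ^ n - m ^ n) / (l - m)) • M + ((l * m ^ n - m * l ^ n) / (l - m)) • 1 := by
  have hd : l - m ≠ 0 := sub_ne_zero.mpr hne
  induction n with
  | zero => simp [hd]
  | succ n ih =>
    have hM2 : M ^ 2 = (l + m) • M - 1 := by rw [sq_eq M hdet, ← hsum]
    have key : M ^ (n + 1) = (((l ^ n - m ^ n) / (l - m)) * (l + m)
        + (l * m ^ n - m * l ^ n) / (l - m)) • M
        + (-((l ^ n - m ^ n) / (l - m))) • 1 := by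
      rw [pow_succ, ih, add_mul, smul_mul_assoc, smul_mul_assoc, one_mul, ← pow_two, hM2]
      module
    rw [key]
    congr 1
    · congr 1
      field_simp
      ring
    · congr 1
      field_simp
      linear_combination (l ^ n - m ^ n) * hprod

lemma Q_pow (γ : SL(2, ℝ)) (n : ℕ) (a b : ℝ)
    (hM : ((γ ^ n : SL(2, ℝ)) : Matrix (Fin 2) (Fin 2) ℝ)
      = a • (γ : Matrix (Fin 2) (Fin 2) ℝ) + b • 1) (z : ℍ) :
    Q (γ ^ n) z = |a| * Q γ z := by
  have h10 : ((γ ^ n : SL(2, ℝ)) : Matrix (Fin 2) (Fin 2) ℝ) 1 0 = a * γ 1 0 := by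
    rw [hM]; simp [Matrix.one_apply]
  have h01 : ((γ ^ n : SL(2, ℝ)) : Matrix (Fin 2) (Fin 2) ℝ) 0 1 = a * γ 0 1 := by
    rw [hM]; simp [Matrix.one_apply]
  have h00 : ((γ ^ n : SL(2, ℝ)) : Matrix (Fin 2) (Fin 2) ℝ) 0 0 = a * γ 0 0 + b := by
    rw [hM]; simp [Matrix.one_apply]
  have h11 : ((γ ^ n : SL(2, ℝ)) : Matrix (Fin 2) (Fin 2) ℝ) 1 1 = a * γ 1 1 + b := by
    rw [hM]; simp [Matrix.one_apply]
  have key : (((γ ^ n) 1 0 : ℝ) : ℂ) * (z : ℂ) ^ 2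
        + ((((γ ^ n) 1 1 : ℝ) : ℂ) - (((γ ^ n) 0 0 : ℝ) : ℂ)) * z - (((γ ^ n) 0 1 : ℝ) : ℂ)
      = (a : ℂ) * ((γ 1 0 : ℂ) * (z : ℂ) ^ 2 + ((γ 1 1 : ℂ) - (γ 0 0 : ℂ)) * z - (γ 0 1 : ℂ)) := by
    rw [h10, h01, h00, h11]
    push_cast
    ring
  rw [Q, Q, key, norm_mul, Complex.norm_real, Real.norm_eq_abs, mul_div_assoc]

lemma hyp_pow (γ : SL(2, ℝ)) (ht : ((γ : Matrix (Fin 2) (Fin 2) ℝ).trace) ^ 2 > 4)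
    (n : ℕ) (hn : 0 < n) :
    (((γ ^ n : SL(2, ℝ)) : Matrix (Fin 2) (Fin 2) ℝ).trace) ^ 2 > 4
      ∧ axis (γ ^ n) = axis γ := by
  set t : ℝ := (γ : Matrix (Fin 2) (Fin 2) ℝ).trace with htdef
  obtain ⟨s, hs, hs2⟩ : ∃ s : ℝ, 0 < s ∧ s ^ 2 = t ^ 2 - 4 :=
    ⟨Real.sqrt (t ^ 2 - 4), Real.sqrt_pos.mpr (by linarith), Real.sq_sqrt (by linarith)⟩
  obtain ⟨l, m, hne, hsum, hprod⟩ : ∃ l m : ℝ, l ≠ m ∧ l + m = t ∧ l * m = 1 := by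
    refine ⟨(t + s) / 2, (t - s) / 2, ?_, by ring, ?_⟩
    · intro h; nlinarith
    · nlinarith [hs2]
  have habs : |l| ≠ |m| := by
    intro h
    rcases abs_eq_abs.mp h with h' | h'
    · exact hne h'
    · nlinarith [hprod]
  have hdet : (γ : Matrix (Fin 2) (Fin 2) ℝ).det = 1 := γ.2
  set a : ℝ := (l ^ n - m ^ n) / (l - m) with hadef
  set b : ℝ := (l * m ^ n - m * l ^ n) / (l - m) with hbdef
  have hM : ((γ ^ n : SL(2, ℝ)) : Matrix (Fin 2) (Fin 2) ℝ)
      = a • (γ : Matrix (Fin 2) (Fin 2) ℝ) + b • 1 := by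
    rw [Matrix.SpecialLinearGroup.coe_pow]
    exact pow_eq_lin _ hdet l m hne hsum hprod n
  have hd : l - m ≠ 0 := sub_ne_zero.mpr hne
  have hpow : l ^ n ≠ m ^ n := by
    have h2 : |l| ^ n ≠ |m| ^ n := by
      rcases habs.lt_or_gt with h | h
      · exact ne_of_lt (pow_lt_pow_left₀ h (abs_nonneg _) hn.ne')
      · exact (ne_of_lt (pow_lt_pow_left₀ h (abs_nonneg _) hn.ne')).symm
    intro h; exact h2 (by rw [← abs_pow, ← abs_pow, h])
  have hane : a ≠ 0 := div_ne_zero (sub_ne_zero.mpr hpow) hd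
  constructor
  · have htr : ((γ ^ n : SL(2, ℝ)) : Matrix (Fin 2) (Fin 2) ℝ).trace = l ^ n + m ^ n := by
      rw [hM, Matrix.trace_add, Matrix.trace_smul, Matrix.trace_smul, Matrix.trace_one]
      rw [← hsum] at htdef
      simp only [smul_eq_mul, htdef, hadef, hbdef]
      rw [Fintype.card_fin]
      field_simp
      linear_combination (m ^ n - l ^ n) * htdef
    rw [htr]
    have hlm : l ^ n * m ^ n = 1 := by rw [← mul_pow, hprod, one_pow]
    have h0 : 0 < (l ^ n - m ^ n) ^ 2 :=
      lt_of_le_of_ne (sq_nonneg _) (Ne.symm (pow_ne_zero 2 (sub_ne_zero.mpr hpow)))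
    have hsq : (l ^ n + m ^ n) ^ 2 = (l ^ n - m ^ n) ^ 2 + 4 := by
      linear_combination 4 * hlm
    linarith
  · have hQ : ∀ z : ℍ, Q (γ ^ n) z = |a| * Q γ z := Q_pow γ n a b hM
    have hapos : 0 < |a| := abs_pos.mpr hane
    rw [axis_eq_Q, axis_eq_Q]
    ext z
    simp only [Set.mem_setOf_eq]
    constructor
    · intro h w
      have := h w
      rw [hQ z, hQ w] at this
      exact (mul_le_mul_iff_right₀ hapos).mp this
    · intro h w
      rw [hQ z, hQ w]
      exact (mul_le_mul_iff_right₀ hapos).mpr (h w)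

lemma axes_eq_of_le {H K : Subgroup SL(2, ℝ)} (hle : H ≤ K) (h : H.relIndex K ≠ 0) :
    axes K = axes H := by
  apply Set.Subset.antisymm
  · rintro P ⟨γ, hγ, ht, rfl⟩
    obtain ⟨n, hn, -, hmem⟩ := Subgroup.exists_pow_mem_of_relIndex_ne_zero h hγ
    obtain ⟨ht', haxis⟩ := hyp_pow γ ht n hn
    exact ⟨γ ^ n, hmem.1, ht', haxis.symm⟩
  · rintro P ⟨γ, hγ, ht, rfl⟩
    exact ⟨γ, hle hγ, ht, rfl⟩

end AxesAux

/-- Commensurable subgroups of `SL(2, ℝ)` are isoaxial: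
`ax(Γ₁) = ax(Γ₁ ∩ Γ₂) = ax(Γ₂)`. -/
theorem axes_commensurable (Γ₁ Γ₂ : Subgroup SL(2, ℝ))
    (h₁ : (Γ₁ ⊓ Γ₂).relIndex Γ₁ ≠ 0) (h₂ : (Γ₁ ⊓ Γ₂).relIndex Γ₂ ≠ 0) :
    axes Γ₁ = axes (Γ₁ ⊓ Γ₂) ∧ axes (Γ₁ ⊓ Γ₂) = axes Γ₂ := by
  exact ⟨AxesAux.axes_eq_of_le inf_le_left h₁, (AxesAux.axes_eq_of_le inf_le_right h₂).symm⟩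
end

section
/- Let Γ be a subgroup of SL(2,ℝ) and let g be an element of the commensurator of Γ in SL(2,ℝ), i.e. gΓg⁻¹ is commensurable with Γ. Then g is an automorphism of ax(Γ): the pointwise image { g • P : P ∈ ax(Γ) } equals ax(Γ). In other words, Comm(Γ) is contained in Aut(ax(Γ)). -/
open UpperHalfPlane Matrix MatrixGroups Pointwise

namespace AxAux

/-- The real function on `ℍ` whose zero set is the axis of `M`. -/
noncomputable def R (M : SL(2, ℝ)) (z : ℍ) : ℝ :=
  M 1 0 * (z.re ^ 2 + z.im ^ 2) + (M 1 1 - M 0 0) * z.re - M 0 1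

/-- The discriminant `(tr M)² - 4`. -/
noncomputable def Δ (M : SL(2, ℝ)) : ℝ :=
  ((M : Matrix (Fin 2) (Fin 2) ℝ).trace) ^ 2 - 4

lemma det_eq (M : SL(2, ℝ)) : M 0 0 * M 1 1 - M 0 1 * M 1 0 = 1 := by
  have := M.2
  rwa [Matrix.det_fin_two] at this

lemma disc_eq (M : SL(2, ℝ)) : Δ M = (M 1 1 - M 0 0) ^ 2 + 4 * (M 0 1 * M 1 0) := by
  have h := det_eq M
  simp only [Δ, Matrix.trace_fin_two]
  nlinarith [h]

lemma denom_ne_zero' (M : SL(2, ℝ)) (z : ℍ) : ((M 1 0 : ℂ) * z + M 1 1) ≠ 0 := by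
  intro h
  have him : (M 1 0 : ℝ) * z.im = 0 := by
    have := congrArg Complex.im h
    simpa using this
  have hc : (M 1 0 : ℝ) = 0 := by
    rcases mul_eq_zero.1 him with h' | h'
    · exact h'
    · exact absurd h' z.im_ne_zero
  have hre : (M 1 0 : ℝ) * z.re + M 1 1 = 0 := by
    have := congrArg Complex.re h
    simpa using this
  have hd : (M 1 1 : ℝ) = 0 := by rw [hc] at hre; linarith
  have := det_eq M
  rw [hc, hd] at this
  simp at this

lemma coe_smul' (M : SL(2,ℝ)) (z : ℍ) :
    ((M • z : ℍ) : ℂ) = ((M 0 0 : ℂ) * z + M 0 1) / ((M 1 0 : ℂ) * z + M 1 1) := by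
  rw [UpperHalfPlane.specialLinearGroup_apply]
  simp

lemma im_smul' (M : SL(2,ℝ)) (z : ℍ) :
    (M • z).im = z.im / Complex.normSq ((M 1 0 : ℂ) * z + M 1 1) := by
  have h := UpperHalfPlane.im_smul_eq_div_normSq
    (SpecialLinearGroup.toGLPos (SpecialLinearGroup.map (algebraMap ℝ ℝ) M)) z
  convert h using 2 <;> simp [UpperHalfPlane.denom]
  rfl

/-- Explicit formula for the displacement of `z` under `M`. -/
lemma dist_smul_eq (M : SL(2,ℝ)) (z : ℍ) :
    dist z (M • z) =
      2 * Real.arsinh (Real.sqrt (R M z ^ 2 + Δ M * z.im ^ 2) / (2 * z.im)) := by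
  set c : ℝ := M 1 0 with hc
  set d : ℝ := M 1 1 with hd
  set a : ℝ := M 0 0 with ha
  set b : ℝ := M 0 1 with hb
  set D : ℂ := (c : ℂ) * z + d with hD
  have hDne : D ≠ 0 := denom_ne_zero' M z
  have habsD : 0 < ‖D‖ := norm_pos_iff.mpr hDne
  set σ : ℂ := (c : ℂ) * (z:ℂ)^2 + ((d:ℂ) - a) * z - b with hσ
  have hns : Complex.normSq σ = R M z ^ 2 + Δ M * z.im ^ 2 := by
    rw [disc_eq M]
    simp only [hσ, Complex.normSq_apply, Complex.add_re, Complex.sub_re, Complex.mul_re,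
      Complex.mul_im, Complex.add_im, Complex.sub_im, Complex.ofReal_re, Complex.ofReal_im,
      Complex.sq_norm, pow_two, Complex.mul_re, Complex.mul_im, UpperHalfPlane.coe_re,
      UpperHalfPlane.coe_im, R]
    ring
  have habsσ : ‖σ‖ = Real.sqrt (R M z ^ 2 + Δ M * z.im ^ 2) := by
    rw [Complex.norm_def, hns]
  have h1 : dist (z : ℂ) ((M • z : ℍ) : ℂ) = ‖σ‖ / ‖D‖ := by
    rw [Complex.dist_eq, coe_smul' M z, ← ha, ← hb, ← hc, ← hd, ← hD]
    rw [← norm_div]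
    congr 1
    field_simp
    ring
  have h2 : Real.sqrt (z.im * (M • z).im) = z.im / ‖D‖ := by
    rw [im_smul' M z, ← hc, ← hd, ← hD]
    rw [show z.im * (z.im / Complex.normSq D) = z.im ^ 2 / Complex.normSq D by ring]
    rw [Real.sqrt_div (sq_nonneg z.im), Real.sqrt_sq z.im_pos.le, ← Complex.norm_def]
  rw [UpperHalfPlane.dist_eq, h1, h2, habsσ]
  congr 2
  field_simp

lemma dist_le_iff (M : SL(2,ℝ)) (hΔ : 0 ≤ Δ M) (z w : ℍ) :
    dist z (M • z) ≤ dist w (M • w) ↔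
      R M z ^ 2 * w.im ^ 2 ≤ R M w ^ 2 * z.im ^ 2 := by
  have hu : 0 ≤ R M z ^ 2 + Δ M * z.im ^ 2 :=
    add_nonneg (sq_nonneg _) (mul_nonneg hΔ (sq_nonneg _))
  have hv : 0 ≤ R M w ^ 2 + Δ M * w.im ^ 2 :=
    add_nonneg (sq_nonneg _) (mul_nonneg hΔ (sq_nonneg _))
  have hz := z.im_pos
  have hw := w.im_pos
  rw [dist_smul_eq M z, dist_smul_eq M w,
    mul_le_mul_iff_right₀ (by norm_num : (0:ℝ) < 2), Real.arsinh_le_arsinh,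
    div_le_div_iff₀ (by positivity) (by positivity)]
  constructor
  · intro h
    have h2 := mul_self_le_mul_self (by positivity) h
    have e1 : Real.sqrt (R M z ^ 2 + Δ M * z.im ^ 2) * (2 * w.im) *
        (Real.sqrt (R M z ^ 2 + Δ M * z.im ^ 2) * (2 * w.im)) =
        (R M z ^ 2 + Δ M * z.im ^ 2) * (4 * w.im ^ 2) := by
      rw [show ∀ a b : ℝ, a * b * (a * b) = (a * a) * (b * b) from fun a b => by ring,
        Real.mul_self_sqrt hu]; ring
    have e2 : Real.sqrt (R M w ^ 2 + Δ M * w.im ^ 2) * (2 * z.im) *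
        (Real.sqrt (R M w ^ 2 + Δ M * w.im ^ 2) * (2 * z.im)) =
        (R M w ^ 2 + Δ M * w.im ^ 2) * (4 * z.im ^ 2) := by
      rw [show ∀ a b : ℝ, a * b * (a * b) = (a * a) * (b * b) from fun a b => by ring,
        Real.mul_self_sqrt hv]; ring
    rw [e1, e2] at h2
    nlinarith [h2]
  · intro h
    have key : (R M z ^ 2 + Δ M * z.im ^ 2) * (2 * w.im) ^ 2 ≤
        (R M w ^ 2 + Δ M * w.im ^ 2) * (2 * z.im) ^ 2 := by nlinarith
    calc Real.sqrt (R M z ^ 2 + Δ M * z.im ^ 2) * (2 * w.im)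
        = Real.sqrt ((R M z ^ 2 + Δ M * z.im ^ 2) * (2 * w.im) ^ 2) := by
          rw [Real.sqrt_mul hu, Real.sqrt_sq (by positivity)]
      _ ≤ Real.sqrt ((R M w ^ 2 + Δ M * w.im ^ 2) * (2 * z.im) ^ 2) :=
          Real.sqrt_le_sqrt key
      _ = Real.sqrt (R M w ^ 2 + Δ M * w.im ^ 2) * (2 * z.im) := by
          rw [Real.sqrt_mul hv, Real.sqrt_sq (by positivity)]

lemma exists_R_zero (M : SL(2,ℝ)) (hΔ : 0 < Δ M) : ∃ w : ℍ, R M w = 0 := by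
  by_cases hc : (M 1 0 : ℝ) = 0
  · have hda : (M 1 1 : ℝ) - M 0 0 ≠ 0 := by
      intro h
      rw [disc_eq M, hc, h] at hΔ
      simp at hΔ
    refine ⟨UpperHalfPlane.mk ⟨M 0 1 / (M 1 1 - M 0 0), 1⟩ (by norm_num), ?_⟩
    show (M 1 0 : ℝ) * ((M 0 1 / (M 1 1 - M 0 0)) ^ 2 + 1 ^ 2)
        + (M 1 1 - M 0 0) * (M 0 1 / (M 1 1 - M 0 0)) - M 0 1 = 0
    rw [hc]
    field_simp
    ring
  · set x : ℝ := (M 0 0 - M 1 1) / (2 * M 1 0) with hx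
    set y : ℝ := Real.sqrt (Δ M) / (2 * |M 1 0|) with hy
    have hcabs : (0:ℝ) < |M 1 0| := abs_pos.2 hc
    have hypos : 0 < y := div_pos (Real.sqrt_pos.2 hΔ) (by positivity)
    refine ⟨UpperHalfPlane.mk ⟨x, y⟩ hypos, ?_⟩
    have hysq : y ^ 2 = Δ M / (4 * (M 1 0) ^ 2) := by
      rw [hy, div_pow, mul_pow, sq_abs, Real.sq_sqrt hΔ.le]
      norm_num
    show (M 1 0 : ℝ) * (x ^ 2 + y ^ 2) + (M 1 1 - M 0 0) * x - M 0 1 = 0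
    rw [hysq, disc_eq M, hx]
    field_simp
    ring

/-- The axis of a hyperbolic element is exactly the zero set of `R`. -/
lemma mem_axis_iff (M : SL(2,ℝ)) (hΔ : 0 < Δ M) (z : ℍ) :
    z ∈ axis M ↔ R M z = 0 := by
  constructor
  · intro hz
    obtain ⟨w, hw⟩ := exists_R_zero M hΔ
    have := (dist_le_iff M hΔ.le z w).1 (hz w)
    rw [hw] at this
    have hz2 : R M z ^ 2 * w.im ^ 2 ≤ 0 := by simpa using this
    have : R M z ^ 2 ≤ 0 := by
      have hw2 : 0 < w.im ^ 2 := by positivity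
      nlinarith
    exact pow_eq_zero_iff (by norm_num) |>.1 (le_antisymm this (sq_nonneg _))
  · intro hz w
    rw [dist_le_iff M hΔ.le z w, hz]
    nlinarith [sq_nonneg (R M w), sq_nonneg z.im, sq_nonneg w.im,
      mul_nonneg (sq_nonneg (R M w)) (sq_nonneg z.im)]

lemma ch2 (A : Matrix (Fin 2) (Fin 2) ℝ) : A * A = A.trace • A - A.det • 1 := by
  ext i j
  fin_cases i <;> fin_cases j <;>
    simp [Matrix.mul_apply, Fin.sum_univ_two, Matrix.trace_fin_two, Matrix.det_fin_two,
      Matrix.one_apply] <;> ring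

noncomputable def ps (t : ℝ) : ℕ → ℝ
  | 0 => 0
  | 1 => 1
  | (n+2) => t * ps t (n+1) - ps t n

lemma ps_pos (t : ℝ) (ht : 2 < t) : ∀ n : ℕ, 0 ≤ ps t n ∧ ps t n < ps t (n+1)
  | 0 => by norm_num [ps]
  | (n+1) => by
      obtain ⟨h0, h1⟩ := ps_pos t ht n
      refine ⟨by linarith, ?_⟩
      show ps t (n+1) < t * ps t (n+1) - ps t n
      nlinarith

lemma pow_rep (A : Matrix (Fin 2) (Fin 2) ℝ) (hdet : A.det = 1) :
    ∀ n : ℕ, A ^ (n+1) = ps A.trace (n+1) • A - ps A.trace n • 1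
  | 0 => by simp [ps]
  | (n+1) => by
      have ih := pow_rep A hdet n
      have h2 := ch2 A
      rw [pow_succ, ih, sub_mul, smul_mul_assoc, smul_mul_assoc, one_mul, h2, hdet, one_smul,
        show ps A.trace (n+1+1) = A.trace * ps A.trace (n+1) - ps A.trace n from rfl]
      module

lemma pow_rep' (M : SL(2,ℝ)) (hΔ : 4 < ((M : Matrix (Fin 2) (Fin 2) ℝ).trace) ^ 2) (n : ℕ) :
    ∃ p q : ℝ, ((M ^ (n+1) : SL(2,ℝ)) : Matrix (Fin 2) (Fin 2) ℝ)
        = p • (M : Matrix (Fin 2) (Fin 2) ℝ) + q • 1 ∧ p ≠ 0 := by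
  set A : Matrix (Fin 2) (Fin 2) ℝ := (M : Matrix (Fin 2) (Fin 2) ℝ) with hA
  have hdet : A.det = 1 := M.2
  have hcoe : ((M ^ (n+1) : SL(2,ℝ)) : Matrix (Fin 2) (Fin 2) ℝ) = A ^ (n+1) := by
    simp [hA]
  rcases lt_or_ge 2 A.trace with ht | ht
  · obtain ⟨h0, h1⟩ := ps_pos A.trace ht n
    exact ⟨ps A.trace (n+1), -(ps A.trace n), by
      rw [hcoe, pow_rep A hdet n]; module, ne_of_gt (lt_of_le_of_lt h0 h1)⟩
  · have ht' : 2 < (-A).trace := by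
      rw [Matrix.trace_neg]
      nlinarith
    have hdet' : (-A).det = 1 := by
      rw [Matrix.det_neg]
      simp [hdet]
    have hrep := pow_rep (-A) hdet' n
    obtain ⟨h0, h1⟩ := ps_pos (-A).trace ht' n
    have hppos : 0 < ps (-A).trace (n+1) := lt_of_le_of_lt h0 h1
    rcases Nat.even_or_odd (n+1) with he | ho
    · refine ⟨-(ps (-A).trace (n+1)), -(ps (-A).trace n), ?_, neg_ne_zero.2 hppos.ne'⟩
      rw [hcoe, ← he.neg_pow A, hrep]
      module
    · refine ⟨ps (-A).trace (n+1), ps (-A).trace n, ?_, hppos.ne'⟩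
      have : A ^ (n+1) = -((-A) ^ (n+1)) := by rw [ho.neg_pow A]; simp
      rw [hcoe, this, hrep]
      module

lemma R_scale (M N : SL(2,ℝ)) (p q : ℝ)
    (h : (N : Matrix (Fin 2) (Fin 2) ℝ) = p • (M : Matrix (Fin 2) (Fin 2) ℝ) + q • 1) (z : ℍ) :
    R N z = p * R M z := by
  have e : ∀ i j, (N : Matrix (Fin 2) (Fin 2) ℝ) i j
      = p * (M : Matrix (Fin 2) (Fin 2) ℝ) i j + q * (1 : Matrix (Fin 2) (Fin 2) ℝ) i j := by
    intro i j; rw [h]; simp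
  simp only [R, e, Matrix.one_apply]
  norm_num
  ring

lemma Δ_scale (M N : SL(2,ℝ)) (p q : ℝ)
    (h : (N : Matrix (Fin 2) (Fin 2) ℝ) = p • (M : Matrix (Fin 2) (Fin 2) ℝ) + q • 1) :
    Δ N = p ^ 2 * Δ M := by
  have e : ∀ i j, (N : Matrix (Fin 2) (Fin 2) ℝ) i j
      = p * (M : Matrix (Fin 2) (Fin 2) ℝ) i j + q * (1 : Matrix (Fin 2) (Fin 2) ℝ) i j := by
    intro i j; rw [h]; simp
  rw [disc_eq M, disc_eq N]
  simp only [e, Matrix.one_apply]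
  norm_num
  ring

/-- Positive powers of a hyperbolic element have the same axis and are hyperbolic. -/
lemma axis_pow (M : SL(2,ℝ)) (hΔ : 0 < Δ M) (n : ℕ) :
    axis (M ^ (n+1)) = axis M ∧ 0 < Δ (M ^ (n+1)) := by
  have hΔ' : 4 < ((M : Matrix (Fin 2) (Fin 2) ℝ).trace) ^ 2 := by
    have := hΔ; rw [Δ] at this; linarith
  obtain ⟨p, q, h, hp⟩ := pow_rep' M hΔ' n
  have hΔpow : Δ (M ^ (n+1)) = p ^ 2 * Δ M := Δ_scale M _ p q h
  have hpos : 0 < Δ (M ^ (n+1)) := by rw [hΔpow]; positivity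
  refine ⟨?_, hpos⟩
  ext z
  rw [mem_axis_iff _ hpos z, mem_axis_iff M hΔ z, R_scale M _ p q h z, mul_eq_zero]
  simp [hp]

lemma trace_conj (g η : SL(2,ℝ)) :
    (((g * η * g⁻¹ : SL(2,ℝ)) : Matrix (Fin 2) (Fin 2) ℝ)).trace
      = ((η : Matrix (Fin 2) (Fin 2) ℝ)).trace := by
  rw [show (g * η * g⁻¹ : SL(2,ℝ)) = g * (η * g⁻¹) from mul_assoc g η g⁻¹,
    Matrix.SpecialLinearGroup.coe_mul, Matrix.trace_mul_comm,
    ← Matrix.SpecialLinearGroup.coe_mul, inv_mul_cancel_right]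

lemma Δ_conj (g η : SL(2,ℝ)) : Δ (g * η * g⁻¹) = Δ η := by
  rw [Δ, Δ, trace_conj]

lemma dist_conj (g η : SL(2,ℝ)) (z : ℍ) :
    dist z ((g * η * g⁻¹) • z) = dist (g⁻¹ • z) (η • (g⁻¹ • z)) := by
  calc dist z ((g * η * g⁻¹) • z)
      = dist (g • (g⁻¹ • z)) (g • (η • (g⁻¹ • z))) := by
        rw [smul_inv_smul, mul_smul, mul_smul]
    _ = dist (g⁻¹ • z) (η • (g⁻¹ • z)) := dist_smul g _ _

lemma axis_conj (g η : SL(2,ℝ)) : axis (g * η * g⁻¹) = g • axis η := by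
  ext z
  rw [Set.mem_smul_set_iff_inv_smul_mem]
  constructor
  · intro hz w
    have h := hz (g • w)
    rw [dist_conj, dist_conj, inv_smul_smul] at h
    exact h
  · intro hz w
    rw [dist_conj, dist_conj]
    exact hz (g⁻¹ • w)

end AxAux

open AxAux in
/-- Any element of the commensurator of `Γ` in `SL(2, ℝ)` is an automorphism of
`ax(Γ)`: `Comm(Γ) ⊆ Aut(ax(Γ))`. -/
theorem commensurator_subset_aut_axes (Γ : Subgroup SL(2, ℝ)) (g : SL(2, ℝ))
    (hg : Subgroup.Commensurable (Γ.map (MulAut.conj g).toMonoidHom) Γ) :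
    (fun P : Set ℍ => g • P) '' axes Γ = axes Γ := by
  set H := Γ.map (MulAut.conj g).toMonoidHom with hH
  have memH : ∀ γ : SL(2,ℝ), γ ∈ Γ → g * γ * g⁻¹ ∈ H := by
    intro γ hγ
    exact ⟨γ, hγ, rfl⟩
  apply Set.Subset.antisymm
  · rintro P ⟨Q, ⟨γ, hγ, htr, rfl⟩, rfl⟩
    have hΔγ : 0 < Δ γ := by rw [Δ]; linarith [htr]
    have hΔconj : 0 < Δ (g * γ * g⁻¹) := by rw [Δ_conj]; exact hΔγ
    obtain ⟨n, hn, -, hpow⟩ :=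
      Subgroup.exists_pow_mem_of_relIndex_ne_zero hg.2 (memH γ hγ)
    obtain ⟨m, rfl⟩ : ∃ m, n = m + 1 := ⟨n - 1, by omega⟩
    have hδΓ : (g * γ * g⁻¹) ^ (m+1) ∈ Γ := hpow.1
    obtain ⟨haxis, hΔpow⟩ := axis_pow (g * γ * g⁻¹) hΔconj m
    refine ⟨(g * γ * g⁻¹) ^ (m+1), hδΓ, ?_, ?_⟩
    · rw [Δ] at hΔpow; linarith
    · rw [haxis, axis_conj]
  · rintro P ⟨γ, hγ, htr, rfl⟩
    have hΔγ : 0 < Δ γ := by rw [Δ]; linarith [htr]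
    obtain ⟨n, hn, -, hpow⟩ :=
      Subgroup.exists_pow_mem_of_relIndex_ne_zero hg.1 hγ
    obtain ⟨m, rfl⟩ : ∃ m, n = m + 1 := ⟨n - 1, by omega⟩
    have hγH : γ ^ (m+1) ∈ H := hpow.1
    obtain ⟨δ, hδΓ, hδeq⟩ := Subgroup.mem_map.1 hγH
    have hconj : g * δ * g⁻¹ = γ ^ (m+1) := by
      simpa using hδeq
    obtain ⟨haxis, hΔpow⟩ := axis_pow γ hΔγ m
    have hΔδ : 0 < Δ δ := by
      rw [← Δ_conj g δ, hconj]; exact hΔpow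
    refine ⟨axis δ, ⟨δ, hδΓ, ?_, rfl⟩, ?_⟩
    · rw [Δ] at hΔδ; linarith
    · show g • axis δ = axis γ
      rw [← axis_conj, hconj, haxis]
end

section
/- Let A ∈ SL(2,ℝ) with (tr A)² > 4, and let ℓ denote the infimum over z ∈ ℍ of the hyperbolic displacement dist(z, A • z). Then ℓ > 0 and |tr A| = 2 cosh(ℓ / 2). -/
open UpperHalfPlane Matrix MatrixGroups

lemma aux_dist (A : SL(2,ℝ)) (z : ℍ) :
    dist z (A • z) = 2 * Real.arsinh (‖(A.1 1 0 : ℂ) * (z:ℂ)^2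
      + ((A.1 1 1 : ℂ) - A.1 0 0) * z - A.1 0 1‖ / (2 * z.im)) := by
  set a := A.1 0 0; set b := A.1 0 1; set c := A.1 1 0; set d := A.1 1 1
  have hdet : a * d - b * c = 1 := by
    have := A.2
    rwa [Matrix.det_fin_two] at this
  set D : ℂ := (c : ℂ) * z + d with hDdef
  have hD : D ≠ 0 := by
    intro h
    have him := congrArg Complex.im h
    have hre := congrArg Complex.re h
    simp [hDdef] at him hre
    rcases him with him | him
    · rw [him] at hre; simp at hre
      rw [him, hre] at hdet; simp at hdet
    · exact z.im_ne_zero him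
  have hcoe : ((A • z : ℍ) : ℂ) = ((a : ℂ) * z + b) / D := by
    rw [specialLinearGroup_apply]; simp [hDdef]; rfl
  have habsD : ‖D‖ ≠ 0 := by simpa using hD
  have h1 : (A • z).im = z.im / Complex.normSq D := by
    rw [← UpperHalfPlane.coe_im, hcoe, Complex.div_im]
    have hn : Complex.normSq D ≠ 0 := by simpa using hD
    rw [hDdef] at hn ⊢
    simp only [Complex.normSq_apply, Complex.add_re, Complex.add_im, Complex.mul_re, Complex.mul_im,
      Complex.ofReal_re, Complex.ofReal_im, UpperHalfPlane.coe_re, UpperHalfPlane.coe_im] at hn ⊢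
    field_simp
    linear_combination z.im * (z.im ^ 2 * c ^ 2 + z.re * c * d * 2 + z.re ^ 2 * c ^ 2 + d ^ 2)⁻¹ * hdet
  have h2 : dist (z : ℂ) ((A • z : ℍ) : ℂ) =
      ‖((c : ℂ) * (z:ℂ)^2 + ((d : ℂ) - a) * z - b)‖ / ‖D‖ := by
    rw [Complex.dist_eq, hcoe, ← norm_div]
    congr 1
    field_simp [hDdef]
    ring
  have h3 : Real.sqrt (z.im * (A • z).im) = z.im / ‖D‖ := by
    rw [h1, ← Complex.sq_norm]
    rw [show z.im * (z.im / ‖D‖ ^ 2) = (z.im / ‖D‖) ^ 2 by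
      field_simp]
    exact Real.sqrt_sq (by positivity)
  rw [UpperHalfPlane.dist_eq, h2, h3]
  congr 1
  have hy : z.im ≠ 0 := z.im_ne_zero
  field_simp

lemma aux_normSq (a b c d : ℝ) (hdet : a * d - b * c = 1) (z : ℂ) :
    (‖(c : ℂ) * z^2 + ((d : ℂ) - a) * z - b‖)^2 =
      z.im^2 * ((a + d)^2 - 4) + (c * (z.re^2 + z.im^2) + (d - a) * z.re - b)^2 := by
  rw [Complex.sq_norm, Complex.normSq_apply]
  simp only [Complex.add_re, Complex.add_im, Complex.sub_re, Complex.sub_im, Complex.mul_re,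
    Complex.mul_im, Complex.ofReal_re, Complex.ofReal_im, pow_two, Complex.mul_re, Complex.mul_im]
  ring_nf
  linear_combination (-4 * z.im^2) * hdet

lemma aux_attain (a b c d : ℝ) (hdet : a * d - b * c = 1) (z : ℍ)
    (hz : c * (z.re^2 + z.im^2) + (d - a) * z.re - b = 0) :
    ‖((c : ℂ) * (z:ℂ)^2 + ((d : ℂ) - a) * z - b)‖ / (2 * z.im) =
      Real.sqrt ((a + d)^2 - 4) / 2 := by
  have hy : 0 < z.im := z.im_pos
  have key := aux_normSq a b c d hdet (z : ℂ)
  rw [z.coe_re, z.coe_im, hz] at key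
  have habs : ‖((c : ℂ) * (z:ℂ)^2 + ((d : ℂ) - a) * z - b)‖ =
      z.im * Real.sqrt ((a + d)^2 - 4) := by
    rw [← Real.sqrt_sq (norm_nonneg _), key]
    rw [show z.im ^ 2 * ((a + d) ^ 2 - 4) + 0 ^ 2 = z.im ^ 2 * ((a + d) ^ 2 - 4) by ring,
      Real.sqrt_mul (sq_nonneg _), Real.sqrt_sq hy.le]
  rw [habs]
  field_simp

/-- For a hyperbolic element `A ∈ SL(2, ℝ)`, the translation length
`ℓ = ⨅ z, dist z (A • z)` is positive and `|tr A| = 2 cosh (ℓ / 2)`. -/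
theorem trace_eq_cosh_translation_length (A : SL(2, ℝ))
    (hA : ((A : Matrix (Fin 2) (Fin 2) ℝ).trace) ^ 2 > 4) :
    0 < ⨅ z : ℍ, dist z (A • z) ∧
      |(A : Matrix (Fin 2) (Fin 2) ℝ).trace| =
        2 * Real.cosh ((⨅ z : ℍ, dist z (A • z)) / 2) := by
  set a := A.1 0 0 with ha; set b := A.1 0 1 with hb
  set c := A.1 1 0 with hc; set d := A.1 1 1 with hd
  have hdet : a * d - b * c = 1 := by
    have := A.2
    rwa [Matrix.det_fin_two] at this
  have htr : (A : Matrix (Fin 2) (Fin 2) ℝ).trace = a + d := by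
    rw [Matrix.trace_fin_two]
  rw [htr] at hA ⊢
  have hdisc : (0:ℝ) < (a + d)^2 - 4 := by linarith
  set s : ℝ := Real.sqrt ((a + d)^2 - 4) / 2 with hs
  have hs_pos : 0 < s := by positivity
  have hs_sq : s^2 = ((a + d)^2 - 4) / 4 := by
    rw [hs, div_pow, Real.sq_sqrt hdisc.le]; norm_num
  -- lower bound
  have hlb : ∀ z : ℍ, s ≤ ‖((c : ℂ) * (z:ℂ)^2 + ((d : ℂ) - a) * z - b)‖
      / (2 * z.im) := by
    intro z
    have hy : 0 < z.im := z.im_pos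
    rw [le_div_iff₀ (by positivity)]
    have key := aux_normSq a b c d hdet (z : ℂ)
    rw [z.coe_re, z.coe_im] at key
    nlinarith [norm_nonneg ((c : ℂ) * (z:ℂ)^2 + ((d : ℂ) - a) * z - b),
      sq_nonneg (c * ((z:ℂ).re^2 + z.im^2) + (d - a) * (z:ℂ).re - b), hy, hs_sq,
      sq_nonneg (‖((c : ℂ) * (z:ℂ)^2 + ((d : ℂ) - a) * z - b)‖ - 2 * z.im * s)]
  -- a point attaining the bound
  obtain ⟨z₀, hz₀⟩ : ∃ z : ℍ,
      ‖((c : ℂ) * (z:ℂ)^2 + ((d : ℂ) - a) * z - b)‖ / (2 * z.im) = s := by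
    by_cases hc0 : c = 0
    · have had : a * d = 1 := by rw [hc0] at hdet; linarith
      have hda : d - a ≠ 0 := by
        intro h
        have h2 : d = a := by linarith
        rw [h2] at hA had
        nlinarith
      refine ⟨⟨⟨b / (d - a), 1⟩, by norm_num⟩, aux_attain a b c d hdet _ ?_⟩
      show c * ((b / (d - a))^2 + 1^2) + (d - a) * (b / (d - a)) - b = 0
      rw [hc0]
      field_simp
      ring
    · refine ⟨⟨⟨(a - d) / (2 * c), Real.sqrt ((a + d)^2 - 4) / (2 * |c|)⟩, by
        have : 0 < |c| := abs_pos.mpr hc0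
        positivity⟩, aux_attain a b c d hdet _ ?_⟩
      show c * (((a - d) / (2 * c))^2 + (Real.sqrt ((a + d)^2 - 4) / (2 * |c|))^2)
          + (d - a) * ((a - d) / (2 * c)) - b = 0
      have hy2 : (Real.sqrt ((a + d)^2 - 4) / (2 * |c|))^2 = ((a + d)^2 - 4) / (4 * c^2) := by
        rw [div_pow, Real.sq_sqrt hdisc.le, mul_pow, sq_abs]; norm_num
      rw [hy2]
      field_simp
      ring_nf
      linear_combination 16 * hdet
  -- the infimum
  have hbdd : BddBelow (Set.range fun z : ℍ => dist z (A • z)) := by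
    refine ⟨0, ?_⟩
    rintro x ⟨z, rfl⟩
    exact dist_nonneg
  have hge : ∀ z : ℍ, 2 * Real.arsinh s ≤ dist z (A • z) := by
    intro z
    rw [aux_dist A z]
    have := hlb z
    have harsinh : Real.arsinh s ≤ Real.arsinh
        (‖((c : ℂ) * (z:ℂ)^2 + ((d : ℂ) - a) * z - b)‖ / (2 * z.im)) :=
      Real.arsinh_le_arsinh.mpr this
    linarith
  have hle : dist z₀ (A • z₀) = 2 * Real.arsinh s := by
    rw [aux_dist A z₀, hz₀]
  have hL : (⨅ z : ℍ, dist z (A • z)) = 2 * Real.arsinh s := by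
    refine le_antisymm ?_ (le_ciInf hge)
    calc (⨅ z : ℍ, dist z (A • z)) ≤ dist z₀ (A • z₀) := ciInf_le hbdd z₀
      _ = 2 * Real.arsinh s := hle
  rw [hL]
  have hars_pos : 0 < Real.arsinh s := by
    rw [← Real.arsinh_zero]
    exact Real.arsinh_lt_arsinh.mpr hs_pos
  constructor
  · linarith
  · rw [show 2 * Real.arsinh s / 2 = Real.arsinh s by ring, Real.cosh_arsinh]
    rw [show 1 + s^2 = ((a + d) / 2)^2 by rw [hs_sq]; ring]
    rw [Real.sqrt_sq_eq_abs, abs_div]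
    rw [show |(2:ℝ)| = 2 by norm_num]
    ring
end

section
/- Let Γ be a subgroup of SL(2,ℝ) and let S ⊆ ℍ be a subset containing at least two distinct points, which is closed in ℍ and discrete (as a topological subspace of ℍ), and which is invariant under Γ: for every γ ∈ Γ, the image γ • S equals S. Then Γ is a discrete subgroup of SL(2,ℝ) (i.e. Γ carries the discrete topology as a subspace of SL(2,ℝ)). -/
open UpperHalfPlane Matrix MatrixGroups Pointwise

/-- `SL(2, ℝ)` topologized as a subspace of the `2 × 2` real matrices. -/
noncomputable instance : TopologicalSpace SL(2, ℝ) :=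
  TopologicalSpace.induced (fun g => (g : Matrix (Fin 2) (Fin 2) ℝ)) inferInstance

lemma my_denom_ne_zero (g : SL(2, ℝ)) (z : ℍ) :
    ((g 1 0 : ℝ) : ℂ) * z + ((g 1 1 : ℝ) : ℂ) ≠ 0 := by
  intro h
  have him : (g 1 0) * z.im = 0 := by
    have := congrArg Complex.im h
    simpa [Complex.add_im, Complex.im_ofReal_mul] using this
  have hc : g 1 0 = 0 := by
    rcases mul_eq_zero.mp him with h' | h'
    · exact h'
    · exact absurd h' (ne_of_gt z.im_pos)
  have hd : g 1 1 = 0 := by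
    rw [hc] at h; simpa using h
  have hdet := g.prop
  rw [Matrix.det_fin_two] at hdet
  rw [hc, hd] at hdet
  norm_num at hdet

lemma smul_coe' (g : SL(2, ℝ)) (z : ℍ) :
    ((g • z : ℍ) : ℂ) = (((g 0 0 : ℝ) : ℂ) * z + ((g 0 1 : ℝ) : ℂ)) /
      (((g 1 0 : ℝ) : ℂ) * z + ((g 1 1 : ℝ) : ℂ)) := by
  rw [specialLinearGroup_apply, coe_mk]
  simp

lemma fixed_eq (g : SL(2, ℝ)) (z : ℍ) (hz : g • z = z) :
    ((g 0 0 : ℝ) : ℂ) * z + ((g 0 1 : ℝ) : ℂ) =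
      (((g 1 0 : ℝ) : ℂ) * z + ((g 1 1 : ℝ) : ℂ)) * z := by
  have h := congrArg (UpperHalfPlane.coe) hz
  rw [smul_coe'] at h
  rw [div_eq_iff (my_denom_ne_zero g z)] at h
  linear_combination h

lemma eq_one_or_neg_one (g : SL(2, ℝ)) (z w : ℍ) (hzw : z ≠ w)
    (hz : g • z = z) (hw : g • w = w) : g = 1 ∨ g = -1 := by
  have e1 := fixed_eq g z hz
  have e2 := fixed_eq g w hw
  have hZW : (z : ℂ) ≠ (w : ℂ) := fun h => hzw (UpperHalfPlane.ext h)
  have key : ((z : ℂ) - w) * (((g 1 0 : ℝ) : ℂ) * ((z : ℂ) + w) +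
      (((g 1 1 : ℝ) : ℂ) - ((g 0 0 : ℝ) : ℂ))) = 0 := by
    linear_combination e2 - e1
  have h2 : ((g 1 0 : ℝ) : ℂ) * ((z : ℂ) + w) +
      (((g 1 1 : ℝ) : ℂ) - ((g 0 0 : ℝ) : ℂ)) = 0 :=
    (mul_eq_zero.mp key).resolve_left (sub_ne_zero.mpr hZW)
  have hcim : g 1 0 * (z.im + w.im) = 0 := by
    have := congrArg Complex.im h2
    simpa [Complex.add_im, Complex.im_ofReal_mul] using this
  have hc0 : g 1 0 = 0 := by
    rcases mul_eq_zero.mp hcim with h' | h'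
    · exact h'
    · exact absurd h' (ne_of_gt (by positivity : (0:ℝ) < z.im + w.im))
  have hc0' : ((g 1 0 : ℝ) : ℂ) = 0 := by exact_mod_cast hc0
  have hda : g 1 1 = g 0 0 := by
    have h3 : (((g 1 1 : ℝ) : ℂ) - ((g 0 0 : ℝ) : ℂ)) = 0 := by
      rw [hc0'] at h2; simpa using h2
    have := sub_eq_zero.mp h3
    exact_mod_cast this
  have hda' : ((g 1 1 : ℝ) : ℂ) = ((g 0 0 : ℝ) : ℂ) := by exact_mod_cast hda
  have hb0 : g 0 1 = 0 := by
    have h4 : ((g 0 1 : ℝ) : ℂ) = 0 := by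
      linear_combination e1 + (z : ℂ) ^ 2 * hc0' + (z : ℂ) * hda'
    exact_mod_cast h4
  have hdet := g.prop
  rw [Matrix.det_fin_two] at hdet
  rw [hb0, hc0, hda] at hdet
  have ha1 : g 0 0 = 1 ∨ g 0 0 = -1 :=
    mul_self_eq_one_iff.mp (by linarith : g 0 0 * g 0 0 = 1)
  rcases ha1 with h | h
  · left
    apply Matrix.SpecialLinearGroup.ext
    intro i j
    fin_cases i <;> fin_cases j <;> simp [h, hb0, hc0, hda]
  · right
    apply Matrix.SpecialLinearGroup.ext
    intro i j
    fin_cases i <;> fin_cases j <;> simp [h, hb0, hc0, hda]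

lemma entry_cont (i j : Fin 2) : Continuous fun g : SL(2, ℝ) => g i j :=
  (continuous_apply j).comp ((continuous_apply i).comp continuous_induced_dom)

lemma cont_smul_const (z : ℍ) : Continuous fun g : SL(2, ℝ) => g • z := by
  apply continuous_induced_rng.2
  show Continuous fun g : SL(2, ℝ) => ((g • z : ℍ) : ℂ)
  have : (fun g : SL(2, ℝ) => ((g • z : ℍ) : ℂ)) = fun g =>
      (((g 0 0 : ℝ) : ℂ) * z + ((g 0 1 : ℝ) : ℂ)) /
      (((g 1 0 : ℝ) : ℂ) * z + ((g 1 1 : ℝ) : ℂ)) := by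
    funext g; exact smul_coe' g z
  rw [this]
  apply Continuous.div
  · exact ((Complex.continuous_ofReal.comp (entry_cont 0 0)).mul continuous_const).add
      (Complex.continuous_ofReal.comp (entry_cont 0 1))
  · exact ((Complex.continuous_ofReal.comp (entry_cont 1 0)).mul continuous_const).add
      (Complex.continuous_ofReal.comp (entry_cont 1 1))
  · intro g; exact my_denom_ne_zero g z

/-- Discreteness criterion: if a subgroup `Γ` of `SL(2, ℝ)` leaves invariant a closed
discrete subset of `ℍ` containing at least two points, then `Γ` is a discrete
subgroup of `SL(2, ℝ)`. -/
theorem discrete_of_invariant_discrete_set (Γ : Subgroup SL(2, ℝ)) (S : Set ℍ)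
    (htwo : ∃ z w : ℍ, z ∈ S ∧ w ∈ S ∧ z ≠ w)
    (hclosed : IsClosed S) (hdisc : DiscreteTopology S)
    (hinv : ∀ γ ∈ Γ, γ • S = S) :
    DiscreteTopology Γ := by
  obtain ⟨z, w, hzS, hwS, hzw⟩ := htwo
  -- each point of S is isolated in ℍ relative to S
  have isolated : ∀ p : ℍ, p ∈ S → ∃ V : Set ℍ, IsOpen V ∧ p ∈ V ∧
      ∀ s ∈ S, s ∈ V → s = p := by
    intro p hp
    have h1 : IsOpen ({⟨p, hp⟩} : Set S) := isOpen_discrete _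
    rw [isOpen_induced_iff] at h1
    obtain ⟨V, hVo, hVeq⟩ := h1
    refine ⟨V, hVo, ?_, ?_⟩
    · have : (⟨p, hp⟩ : S) ∈ (Subtype.val ⁻¹' V : Set S) := by
        rw [hVeq]; exact rfl
      exact this
    · intro s hs hsV
      have : (⟨s, hs⟩ : S) ∈ (Subtype.val ⁻¹' V : Set S) := hsV
      rw [hVeq] at this
      exact congrArg Subtype.val this
  have hsmulS : ∀ g : SL(2, ℝ), g ∈ Γ → ∀ p ∈ S, g • p ∈ S := by
    intro g hg p hp
    rw [← hinv g hg]
    exact Set.smul_mem_smul_set hp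
  refine discreteTopology_iff_isOpen_singleton.mpr ?_
  intro γ₀
  set γ : SL(2, ℝ) := (γ₀ : SL(2, ℝ)) with hγ
  obtain ⟨Vz, hVzo, hzin, hVz⟩ := isolated (γ • z) (hsmulS γ γ₀.prop z hzS)
  obtain ⟨Vw, hVwo, hwin, hVw⟩ := isolated (γ • w) (hsmulS γ γ₀.prop w hwS)
  -- the trace-pairing function
  set t : SL(2, ℝ) → ℝ := fun g =>
    g 0 0 * γ 0 0 + g 0 1 * γ 0 1 + g 1 0 * γ 1 0 + g 1 1 * γ 1 1 with ht
  have tcont : Continuous t := by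
    apply Continuous.add
    apply Continuous.add
    apply Continuous.add
    all_goals exact (entry_cont _ _).mul continuous_const
  have tpos : 0 < t γ := by
    by_contra hle
    push_neg at hle
    have hle' : γ 0 0 * γ 0 0 + γ 0 1 * γ 0 1 + γ 1 0 * γ 1 0 + γ 1 1 * γ 1 1 ≤ 0 := hle
    have e00 : γ 0 0 * γ 0 0 = 0 := by
      nlinarith [hle', mul_self_nonneg (γ 0 0), mul_self_nonneg (γ 0 1),
        mul_self_nonneg (γ 1 0), mul_self_nonneg (γ 1 1)]
    have e11 : γ 1 1 * γ 1 1 = 0 := by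
      nlinarith [hle', mul_self_nonneg (γ 0 0), mul_self_nonneg (γ 0 1),
        mul_self_nonneg (γ 1 0), mul_self_nonneg (γ 1 1)]
    have e01 : γ 0 1 * γ 0 1 = 0 := by
      nlinarith [hle', mul_self_nonneg (γ 0 0), mul_self_nonneg (γ 0 1),
        mul_self_nonneg (γ 1 0), mul_self_nonneg (γ 1 1)]
    have e10 : γ 1 0 * γ 1 0 = 0 := by
      nlinarith [hle', mul_self_nonneg (γ 0 0), mul_self_nonneg (γ 0 1),
        mul_self_nonneg (γ 1 0), mul_self_nonneg (γ 1 1)]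
    have hdet := γ.prop
    rw [Matrix.det_fin_two] at hdet
    rw [mul_self_eq_zero.mp e00, mul_self_eq_zero.mp e01,
      mul_self_eq_zero.mp e10, mul_self_eq_zero.mp e11] at hdet
    norm_num at hdet
  set U : Set SL(2, ℝ) :=
    {g | g • z ∈ Vz} ∩ {g | g • w ∈ Vw} ∩ {g | 0 < t g} with hU
  have hUo : IsOpen U := by
    apply IsOpen.inter
    apply IsOpen.inter
    · exact hVzo.preimage (cont_smul_const z)
    · exact hVwo.preimage (cont_smul_const w)
    · exact isOpen_lt continuous_const tcont
  have hset : ({γ₀} : Set Γ) = Subtype.val ⁻¹' U := by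
    apply Set.eq_of_subset_of_subset
    · rintro x rfl
      exact ⟨⟨hzin, hwin⟩, tpos⟩
    · rintro x ⟨⟨hx1, hx2⟩, hx3⟩
      have hxz : (x : SL(2, ℝ)) • z = γ • z :=
        hVz _ (hsmulS _ x.prop z hzS) hx1
      have hxw : (x : SL(2, ℝ)) • w = γ • w :=
        hVw _ (hsmulS _ x.prop w hwS) hx2
      have hfixz : (γ⁻¹ * (x : SL(2, ℝ))) • z = z := by
        rw [mul_smul, hxz, inv_smul_smul]
      have hfixw : (γ⁻¹ * (x : SL(2, ℝ))) • w = w := by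
        rw [mul_smul, hxw, inv_smul_smul]
      rcases eq_one_or_neg_one _ z w hzw hfixz hfixw with h | h
      · have : (x : SL(2, ℝ)) = γ := by
          have := congrArg (γ * ·) h
          simpa [← mul_assoc] using this
        exact Set.mem_singleton_iff.mpr (Subtype.ext this)
      · exfalso
        have hx : (x : SL(2, ℝ)) = -γ := by
          have := congrArg (γ * ·) h
          simpa [← mul_assoc, mul_neg_one] using this
        have : t (x : SL(2, ℝ)) = -(t γ) := by
          rw [hx, ht]
          simp only [Matrix.SpecialLinearGroup.coe_neg]
          simp [Matrix.neg_apply]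
          ring
        have hx3' : 0 < t (x : SL(2, ℝ)) := hx3
        rw [this] at hx3'
        linarith
  rw [hset]
  exact hUo.preimage continuous_subtype_val
end
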